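/- Let C be a complex of abelian groups such that all cohomology groups of C are p-torsion and the cohomology of C ⊗^L ℤ/p vanishes in all nonzero degrees. Then H^1(C) is a p-divisible group and H^i(C) = 0 for all i ≠ 1. -/

import Mathlib

/-! STATEMENT 3 -/

/-- A (cochain) complex of abelian groups indexed by `ℤ`. -/
structure Cplx : Type 1 where
  X : ℤ → Type
  inst : ∀ n, AddCommGroup (X n)
  d : ∀ n, X n →+ X (n + 1)
  dd : ∀ n (x : X n), d (n + 1) (d n x) = 0

attribute [instance] Cplx.inst

namespace Cplx

/-- transport along an equality of degrees -/
def cast (C : Cplx) {m n : ℤ} (h : m = n) : C.X m ≃+ C.X n :=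
  h ▸ AddEquiv.refl (C.X m)

/-- cocycles in degree `n` -/
def cocycles (C : Cplx) (n : ℤ) : AddSubgroup (C.X n) := (C.d n).ker

/-- coboundaries in degree `n` -/
def bdry (C : Cplx) (n : ℤ) : AddSubgroup (C.X n) :=
  (C.d (n - 1)).range.map (C.cast (show n - 1 + 1 = n by omega)).toAddMonoidHom

/-- the cohomology of `C` in degree `n` -/
def H (C : Cplx) (n : ℤ) : Type :=
  ↥(C.cocycles n) ⧸ ((C.bdry n).addSubgroupOf (C.cocycles n))

instance (C : Cplx) (n : ℤ) : AddCommGroup (C.H n) := by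
  unfold H; infer_instance

/-- morphisms of complexes -/
structure Hom (C D : Cplx) where
  f : ∀ n, C.X n →+ D.X n
  comm : ∀ n (x : C.X n), D.d n (f n x) = f (n + 1) (C.d n x)

theorem f_cast {C D : Cplx} (φ : Hom C D) {m n : ℤ} (h : m = n) (x : C.X m) :
    φ.f n (C.cast h x) = D.cast h (φ.f m x) := by subst h; rfl

/-- a morphism maps cocycles to cocycles… -/
def mapCocycles {C D : Cplx} (φ : Hom C D) (n : ℤ) : ↥(C.cocycles n) →+ ↥(D.cocycles n) :=
  AddMonoidHom.codRestrict ((φ.f n).comp (C.cocycles n).subtype) _ (fun x => by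
    have hx : C.d n (x : C.X n) = 0 := x.2
    show φ.f n (x : C.X n) ∈ (D.d n).ker
    rw [AddMonoidHom.mem_ker, φ.comm n, hx, map_zero])

/-- …hence induces a map on cohomology -/
def mapH {C D : Cplx} (φ : Hom C D) (n : ℤ) : C.H n →+ D.H n :=
  QuotientAddGroup.map _ _ (mapCocycles φ n) (by
    intro x hx
    rw [AddSubgroup.mem_comap]
    rw [AddSubgroup.mem_addSubgroupOf] at hx ⊢
    rcases hx with ⟨z, hz, hzx⟩
    rcases hz with ⟨y, rfl⟩
    refine ⟨D.d (n - 1) (φ.f (n - 1) y), ⟨φ.f (n - 1) y, rfl⟩, ?_⟩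
    show D.cast (show n - 1 + 1 = n by omega) (D.d (n - 1) (φ.f (n - 1) y))
        = ((mapCocycles φ n x : ↥(D.cocycles n)) : D.X n)
    rw [φ.comm (n - 1) y, ← f_cast φ _ (C.d (n - 1) y)]
    have hzx' : C.cast (show n - 1 + 1 = n by omega) (C.d (n - 1) y) = (x : C.X n) := hzx
    rw [hzx']
    rfl)

/-- quasi-isomorphisms -/
def qiso {C D : Cplx} (φ : Hom C D) : Prop := ∀ n, Function.Bijective (mapH φ n)

/-- `C` and `D` are quasi-isomorphic (connected by a cospan of quasi-isomorphisms). -/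
def QIso (C D : Cplx) : Prop :=
  ∃ (Z : Cplx) (f : Hom C Z) (g : Hom D Z), qiso f ∧ qiso g

end Cplx

namespace Statement3

open Cplx

variable (C : Cplx) (p : ℕ)

/-- the cone of multiplication by `k` on `C`; this is `C ⊗ Cₙ = C ⊗ Cone(k : ℤ → ℤ)` -/
def cone (k : ℤ) : Cplx where
  X m := C.X (m + 1) × C.X m
  inst m := by infer_instance
  d m := AddMonoidHom.mk'
    (fun (x : C.X (m + 1) × C.X m) => (C.d (m + 1) x.1, k • x.1 - C.d m x.2))
    (by
      intro x y
      refine Prod.ext (by simp) ?_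
      show k • (x.1 + y.1) - C.d m (x.2 + y.2) = _
      simp [smul_add, map_add]
      abel)
  dd m x := by
    refine Prod.ext ?_ ?_
    · exact C.dd (m + 1) x.1
    · show k • C.d (m + 1) x.1 - C.d (m + 1) (k • x.1 - C.d m x.2) = 0
      rw [map_sub, map_zsmul, C.dd m x.2]
      abel



/-! ### Auxiliary lemmas -/

theorem cast_refl (C : Cplx) {m : ℤ} (h : m = m) (x : C.X m) : C.cast h x = x := rfl

theorem d_cast (C : Cplx) {m n : ℤ} (h : m = n) (h' : m + 1 = n + 1) (x : C.X m) :
    C.d n (C.cast h x) = C.cast h' (C.d m x) := by subst h; rfl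

theorem cast_cast (C : Cplx) {m n k : ℤ} (h : m = n) (h' : n = k) (h'' : m = k) (x : C.X m) :
    C.cast h' (C.cast h x) = C.cast h'' x := by subst h; subst h'; rfl

theorem cone_cast (k : ℤ) {m n : ℤ} (h : m = n) (h' : m + 1 = n + 1)
    (x : (cone C k).X m) :
    (cone C k).cast h x = (C.cast h' x.1, C.cast h x.2) := by subst h; rfl

theorem cone_d (k : ℤ) (m : ℤ) (x : (cone C k).X m) :
    (cone C k).d m x = (C.d (m + 1) x.1, k • x.1 - C.d m x.2) := rfl

theorem mem_bdry {C : Cplx} {n : ℤ} (h : n - 1 + 1 = n) (x : C.X n) :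
    x ∈ C.bdry n ↔ ∃ y : C.X (n - 1), C.cast h (C.d (n - 1) y) = x := by
  constructor
  · rintro ⟨z, ⟨y, rfl⟩, rfl⟩; exact ⟨y, rfl⟩
  · rintro ⟨y, rfl⟩; exact ⟨C.d (n - 1) y, ⟨y, rfl⟩, rfl⟩

theorem mk_eq_zero_iff {C : Cplx} {n : ℤ} (z : ↥(C.cocycles n)) :
    (QuotientAddGroup.mk z : C.H n) = 0 ↔ (z : C.X n) ∈ C.bdry n := by
  rw [QuotientAddGroup.eq_zero_iff, AddSubgroup.mem_addSubgroupOf]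

theorem H_subsingleton_bdry {C : Cplx} {n : ℤ} (hs : Subsingleton (C.H n))
    (z : ↥(C.cocycles n)) : (z : C.X n) ∈ C.bdry n := by
  rw [← mk_eq_zero_iff]
  exact hs.elim _ _

/-- `p` is surjective on `Hⁿ(C)` for `n ≠ 0`. -/
theorem p_surj (n : ℤ) (hs : Subsingleton ((cone C (p : ℤ)).H n)) (y : C.H n) :
    ∃ x : C.H n, (p : ℤ) • x = y := by
  obtain ⟨z, rfl⟩ := QuotientAddGroup.mk_surjective y
  have h : n - 1 + 1 = n := by omega
  -- the element (0, z) of the cone is a cocycle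
  have hv : ((0, (z : C.X n)) : (cone C (p : ℤ)).X n) ∈ (cone C (p : ℤ)).cocycles n := by
    show (cone C (p : ℤ)).d n _ = 0
    erw [cone_d]
    have hz : C.d n (z : C.X n) = 0 := z.2
    simp [hz]
    rfl
  have hb := H_subsingleton_bdry hs ⟨_, hv⟩
  rw [mem_bdry h] at hb
  obtain ⟨w, hw⟩ := hb
  rw [cone_cast C (p : ℤ) h (by omega)] at hw
  have hw1 : C.cast (by omega : n - 1 + 1 + 1 = n + 1) (C.d (n - 1 + 1) w.1) = 0 :=
    congrArg Prod.fst hw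
  have hw2 : C.cast h ((p : ℤ) • w.1 - C.d (n - 1) w.2) = (z : C.X n) :=
    congrArg Prod.snd hw
  set a : C.X n := C.cast h w.1 with ha
  have hac : a ∈ C.cocycles n := by
    show a ∈ (C.d n).ker
    rw [AddMonoidHom.mem_ker, ha, d_cast C h (by omega : n - 1 + 1 + 1 = n + 1), hw1]
  refine ⟨QuotientAddGroup.mk ⟨a, hac⟩, ?_⟩
  have : (p : ℤ) • (QuotientAddGroup.mk ⟨a, hac⟩ : C.H n)
      = QuotientAddGroup.mk ((p : ℤ) • ⟨a, hac⟩) := rfl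
  refine this.trans (QuotientAddGroup.eq.mpr ?_)
  rw [AddSubgroup.mem_addSubgroupOf]
  rw [mem_bdry h]
  refine ⟨-w.2, ?_⟩
  show C.cast h (C.d (n - 1) (-w.2)) = (-((p : ℤ) • ⟨a, hac⟩) + z : ↥(C.cocycles n))
  push_cast
  rw [map_neg, map_neg]
  have : (p : ℤ) • a - C.cast h (C.d (n - 1) w.2) = (z : C.X n) := by
    rw [← hw2, map_sub, map_zsmul]
  rw [← this]
  abel

/-- `p` is injective on `Hⁿ(C)` for `n ≠ 1`. -/
theorem p_inj (n : ℤ) (hs : Subsingleton ((cone C (p : ℤ)).H (n - 1)))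
    (x : C.H n) (hx : (p : ℤ) • x = 0) : x = 0 := by
  obtain ⟨z, rfl⟩ := QuotientAddGroup.mk_surjective x
  have h : n - 1 + 1 = n := by omega
  have hpz : ((p : ℤ) • z : ↥(C.cocycles n)) = ((p : ℤ) • (z : C.X n) : C.X n) := rfl
  have hx' : ((p : ℤ) • (z : C.X n)) ∈ C.bdry n := by
    have : (QuotientAddGroup.mk ((p : ℤ) • z) : C.H n) = 0 := hx
    rw [mk_eq_zero_iff] at this
    rwa [hpz] at this
  rw [mem_bdry h] at hx'
  obtain ⟨w, hw⟩ := hx'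
  -- (cast h⁻¹ z, w) is a cocycle of the cone in degree n - 1
  set z' : C.X (n - 1 + 1) := C.cast h.symm (z : C.X n) with hz'
  have hdz' : C.d (n - 1 + 1) z' = 0 := by
    rw [hz', d_cast C h.symm (by omega)]
    have hz : C.d n (z : C.X n) = 0 := z.2
    rw [hz]; simp
  have hdw : C.d (n - 1) w = (p : ℤ) • z' := by
    apply (C.cast h).injective
    rw [hw, map_zsmul, hz', cast_cast C h.symm h rfl, cast_refl]
  have hv : ((z', w) : (cone C (p : ℤ)).X (n - 1)) ∈ (cone C (p : ℤ)).cocycles (n - 1) := by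
    show (cone C (p : ℤ)).d (n - 1) _ = 0
    erw [cone_d, hdz', hdw]
    simp
    rfl
  have hb := H_subsingleton_bdry hs ⟨_, hv⟩
  have h2 : n - 1 - 1 + 1 = n - 1 := by omega
  rw [mem_bdry h2] at hb
  obtain ⟨u, hu⟩ := hb
  rw [cone_cast C (p : ℤ) h2 (by omega)] at hu
  have hu1 : C.cast (by omega : n - 1 - 1 + 1 + 1 = n - 1 + 1)
      (C.d (n - 1 - 1 + 1) u.1) = z' := congrArg Prod.fst hu
  refine (QuotientAddGroup.eq_zero_iff _).mpr ?_
  rw [AddSubgroup.mem_addSubgroupOf, mem_bdry h]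
  refine ⟨C.cast h2 u.1, ?_⟩
  rw [d_cast C h2 (by omega), cast_cast C (by omega) h (by omega)]
  rw [← cast_cast C (by omega : n - 1 - 1 + 1 + 1 = n - 1 + 1) h (by omega), hu1, hz',
    cast_cast C h.symm h rfl, cast_refl]

/-- let `C` be a complex of abelian groups all of whose cohomology groups are
`p`-torsion, and such that the cohomology of `C ⊗^L ℤ/p = Cone(p : C → C)` vanishes in all
nonzero degrees.  Then `H¹(C)` is `p`-divisible and `Hⁱ(C) = 0` for all `i ≠ 1`. -/
theorem statement3 (hp : p.Prime)
    -- the cohomology of C is p-torsion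
    (htors : ∀ (n : ℤ) (x : C.H n), ∃ k : ℕ, ((p : ℤ) ^ k) • x = 0)
    -- C ⊗^L ℤ/p is acyclic in nonzero degrees
    (hacyc : ∀ n : ℤ, n ≠ 0 → Subsingleton ((cone C (p : ℤ)).H n)) :
    -- H¹(C) is p-divisible and Hⁱ(C) = 0 for i ≠ 1
    (∀ y : C.H 1, ∃ x : C.H 1, (p : ℤ) • x = y) ∧
    (∀ n : ℤ, n ≠ 1 → Subsingleton (C.H n)) := by
  have hsurj : ∀ (n : ℤ), n ≠ 0 → ∀ y : C.H n, ∃ x : C.H n, (p : ℤ) • x = y :=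
    fun n hn y => p_surj C p n (hacyc n hn) y
  have hinj : ∀ (n : ℤ), n ≠ 1 → ∀ x : C.H n, (p : ℤ) • x = 0 → x = 0 :=
    fun n hn x hx => p_inj C p n (hacyc (n - 1) (by omega)) x hx
  constructor
  · exact hsurj 1 one_ne_zero
  · intro n hn
    have hzero : ∀ x : C.H n, x = 0 := by
      intro x
      obtain ⟨k, hk⟩ := htors n x
      induction k generalizing x with
      | zero => simpa using hk
      | succ k ih =>
        apply hinj n hn
        apply ih
        rw [← hk, pow_succ, mul_smul]
    exact ⟨fun a b => by rw [hzero a, hzero b]⟩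


end Statement3
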